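/- Let t(d) be the number of signed matrices obtained as follows: choose a d×d 0-1 matrix T with exactly two ones in each row and column, replace T by T ⊗ [[1,1],[1,1]], and assign signs ±1 to the ones so that the product of nonzero entries in every row and every column of the resulting 2d×2d matrix equals −1. Then t(d) = 2^{4d} · (d!)² · Σ_{i=0}^{d} (−1)^i / i!. -/

import Mathlib

open Finset

def omegaSet {ι κ : Type*} [Fintype ι] [Fintype κ] [DecidableEq ℤ]
    (A : Matrix ι κ ℤ) : Set (Matrix ι κ ℤ) :=
  {C | (∀ i j, (A i j = 0 → C i j = 0) ∧ (A i j = 1 → C i j = 1 ∨ C i j = -1)) ∧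
       (∀ i, ∏ j, (if C i j = 0 then 1 else C i j) = -1) ∧
       (∀ j, ∏ i, (if C i j = 0 then 1 else C i j) = -1)}

def TwoPerLine {d : ℕ} (B : Matrix (Fin d) (Fin d) ℤ) : Prop :=
  (∀ i j, B i j = 0 ∨ B i j = 1) ∧
  (∀ i, ∑ j, B i j = 2) ∧ (∀ j, ∑ i, B i j = 2)

def MinimalTwoPerLine {d : ℕ} (B : Matrix (Fin d) (Fin d) ℤ) : Prop :=
  TwoPerLine B ∧
  ∀ s t : Finset (Fin d), s.Nonempty →
    (∀ i ∈ s, ∑ j ∈ t, B i j = 2) → (∀ j ∈ t, ∑ i ∈ s, B i j = 2) →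
    s = Finset.univ ∧ t = Finset.univ

def blow {d : ℕ} (T : Matrix (Fin d) (Fin d) ℤ) :
    Matrix (Fin d × Fin 2) (Fin d × Fin 2) ℤ :=
  fun i j => T i.1 j.1

namespace TCount

variable {d : ℕ}

def sgn (z : ℤ) : ℤ := if z = 0 then 1 else z

@[simp] lemma sgn_zero : sgn 0 = 1 := rfl
lemma sgn_unit {u : ℤ} (hu : u = 1 ∨ u = -1) : sgn u = u := by
  rcases hu with rfl | rfl <;> rfl

lemma unit_mul {u v : ℤ} (hu : u = 1 ∨ u = -1) (hv : v = 1 ∨ v = -1) :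
    u * v = 1 ∨ u * v = -1 := by rcases hu with rfl | rfl <;> rcases hv with rfl | rfl <;> simp

lemma unit_eq_of_mul_one {u v : ℤ} (hu : u = 1 ∨ u = -1) (hv : v = 1 ∨ v = -1)
    (h : u * v = 1) : u = v := by
  rcases hu with rfl | rfl <;> rcases hv with rfl | rfl <;> omega

/-- product of sgn over a pair-supported function -/
lemma prod_sgn_pair {g : Fin d → ℤ} {a b : Fin d} (hab : a ≠ b)
    (h0 : ∀ j, j ≠ a → j ≠ b → g j = 0) :
    ∏ j, sgn (g j) = sgn (g a) * sgn (g b) := by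
  rw [← Finset.prod_pair (f := fun j => sgn (g j)) hab]
  refine (Finset.prod_subset (Finset.subset_univ _) ?_).symm
  intro x _ hx
  simp only [Finset.mem_insert, Finset.mem_singleton, not_or] at hx
  rw [h0 x hx.1 hx.2, sgn_zero]

/-- the support of row `i` -/
def rowset (T : Matrix (Fin d) (Fin d) ℤ) (i : Fin d) : Finset (Fin d) :=
  Finset.univ.filter fun j => T i j = 1

def colset (T : Matrix (Fin d) (Fin d) ℤ) (j : Fin d) : Finset (Fin d) :=
  Finset.univ.filter fun i => T i j = 1

lemma card_eq_two_of_01 {v : Fin d → ℤ} (h01 : ∀ j, v j = 0 ∨ v j = 1)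
    (hsum : ∑ j, v j = 2) : (Finset.univ.filter fun j => v j = 1).card = 2 := by
  have : ∑ j, v j = ((Finset.univ.filter fun j => v j = 1).card : ℤ) := by
    rw [Finset.card_filter]
    push_cast
    refine Finset.sum_congr rfl fun j _ => ?_
    rcases h01 j with h | h <;> simp [h]
  rw [this] at hsum
  exact_mod_cast hsum

lemma rowset_card (T : Matrix (Fin d) (Fin d) ℤ) (hT : TwoPerLine T) (i : Fin d) :
    (rowset T i).card = 2 := card_eq_two_of_01 (fun j => hT.1 i j) (hT.2.1 i)

lemma colset_card (T : Matrix (Fin d) (Fin d) ℤ) (hT : TwoPerLine T) (j : Fin d) :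
    (colset T j).card = 2 := card_eq_two_of_01 (fun i => hT.1 i j) (hT.2.2 j)

lemma mem_rowset {T : Matrix (Fin d) (Fin d) ℤ} {i j : Fin d} :
    j ∈ rowset T i ↔ T i j = 1 := by simp [rowset]

lemma mem_colset {T : Matrix (Fin d) (Fin d) ℤ} {i j : Fin d} :
    i ∈ colset T j ↔ T i j = 1 := by simp [colset]


/-! ## Characterization of membership in `omegaSet (blow T)` -/

lemma mem_omega_blow {T : Matrix (Fin d) (Fin d) ℤ} {C : Matrix (Fin d × Fin 2) (Fin d × Fin 2) ℤ} :
    C ∈ omegaSet (blow T) ↔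
      (∀ i j a b, (T i j = 0 → C (i,a) (j,b) = 0) ∧ (T i j = 1 → C (i,a) (j,b) = 1 ∨ C (i,a) (j,b) = -1)) ∧
      (∀ i a, (∏ j, sgn (C (i,a) (j,0)) * sgn (C (i,a) (j,1))) = -1) ∧
      (∀ j b, (∏ i, sgn (C (i,0) (j,b)) * sgn (C (i,1) (j,b))) = -1) := by
  have hprod : ∀ (D : Fin d × Fin 2 → ℤ),
      (∏ x, (if D x = 0 then 1 else D x)) = ∏ y : Fin d, (sgn (D (y,0)) * sgn (D (y,1))) := by
    intro D
    rw [Fintype.prod_prod_type]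
    exact Finset.prod_congr rfl fun y _ => by rw [Fin.prod_univ_two]; rfl
  constructor
  · rintro ⟨h1, h2, h3⟩
    refine ⟨fun i j a b => h1 (i,a) (j,b), fun i a => ?_, fun j b => ?_⟩
    · rw [← hprod fun x => C (i,a) x]; exact h2 (i,a)
    · rw [← hprod fun x => C x (j,b)]; exact h3 (j,b)
  · rintro ⟨h1, h2, h3⟩
    refine ⟨fun i j => h1 i.1 j.1 i.2 j.2, fun i => ?_, fun j => ?_⟩
    · rw [hprod fun x => C i x]; exact h2 i.1 i.2
    · rw [hprod fun x => C x j]; exact h3 j.1 j.2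

/-! ## The four data sets -/

def Supp (T s : Matrix (Fin d) (Fin d) ℤ) : Prop :=
  ∀ i j, (T i j = 0 → s i j = 0) ∧ (T i j = 1 → s i j = 1 ∨ s i j = -1)

def PSet (T : Matrix (Fin d) (Fin d) ℤ) : Type :=
  {p : Matrix (Fin d) (Fin d) ℤ // Supp T p ∧ (∀ i, ∏ j, sgn (p i j) = 1) ∧
    (∀ j, ∏ i, sgn (p i j) = 1)}

def RSet (T : Matrix (Fin d) (Fin d) ℤ) : Type :=
  {r : Matrix (Fin d) (Fin d) ℤ // Supp T r ∧ ∀ i, ∏ j, sgn (r i j) = -1}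

def CSet (T : Matrix (Fin d) (Fin d) ℤ) : Type :=
  {c : Matrix (Fin d) (Fin d) ℤ // Supp T c ∧ ∀ j, ∏ i, sgn (c i j) = -1}

def XSet (T : Matrix (Fin d) (Fin d) ℤ) : Type :=
  {x : Matrix (Fin d) (Fin d) ℤ // Supp T x}


/-! ## block helpers -/

lemma sgn_mul_pair {u v : ℤ} (h : (u = 0 ∧ v = 0) ∨ ((u = 1 ∨ u = -1) ∧ (v = 1 ∨ v = -1))) :
    sgn (u * v) = sgn u * sgn v := by
  rcases h with ⟨rfl, rfl⟩ | ⟨hu, hv⟩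
  · decide
  · rcases hu with rfl | rfl <;> rcases hv with rfl | rfl <;> decide

lemma L1 {x r : ℤ} (h : (x = 0 ∧ r = 0) ∨ ((x = 1 ∨ x = -1) ∧ (r = 1 ∨ r = -1))) :
    sgn x * sgn (x * r) = sgn r := by
  rcases h with ⟨rfl, rfl⟩ | ⟨hx, hr⟩
  · decide
  · rcases hx with rfl | rfl <;> rcases hr with rfl | rfl <;> decide

lemma L2 {x r c p : ℤ}
    (h : (x = 0 ∧ r = 0 ∧ c = 0 ∧ p = 0) ∨
      ((x = 1 ∨ x = -1) ∧ (r = 1 ∨ r = -1) ∧ (c = 1 ∨ c = -1) ∧ (p = 1 ∨ p = -1))) :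
    sgn (x * c) * sgn (x * r * c * p) = sgn r * sgn p := by
  rcases h with ⟨rfl, rfl, rfl, rfl⟩ | ⟨hx, hr, hc, hp⟩
  · decide
  · rcases hx with rfl | rfl <;> rcases hr with rfl | rfl <;> rcases hc with rfl | rfl <;>
      rcases hp with rfl | rfl <;> decide

lemma L4 {x r c p : ℤ}
    (h : (x = 0 ∧ r = 0 ∧ c = 0 ∧ p = 0) ∨
      ((x = 1 ∨ x = -1) ∧ (r = 1 ∨ r = -1) ∧ (c = 1 ∨ c = -1) ∧ (p = 1 ∨ p = -1))) :
    sgn (x * r) * sgn (x * r * c * p) = sgn c * sgn p := by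
  rcases h with ⟨rfl, rfl, rfl, rfl⟩ | ⟨hx, hr, hc, hp⟩
  · decide
  · rcases hx with rfl | rfl <;> rcases hr with rfl | rfl <;> rcases hc with rfl | rfl <;>
      rcases hp with rfl | rfl <;> decide

lemma inv1 {u v : ℤ} (hu : u = 1 ∨ u = -1) : u * (u * v) = v := by
  rcases hu with rfl | rfl <;> ring

lemma inv4 {x r c p : ℤ} (hx : x = 1 ∨ x = -1) (hr : r = 1 ∨ r = -1) (hc : c = 1 ∨ c = -1) :
    x * (x * r) * (x * c) * (x * r * c * p) = p := by
  rcases hx with rfl | rfl <;> rcases hr with rfl | rfl <;> rcases hc with rfl | rfl <;> ring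

lemma fin_two (a : Fin 2) : a = 0 ∨ a = 1 := by revert a; decide

def pOf (C : Matrix (Fin d × Fin 2) (Fin d × Fin 2) ℤ) : Matrix (Fin d) (Fin d) ℤ :=
  fun i j => C (i,0) (j,0) * C (i,0) (j,1) * C (i,1) (j,0) * C (i,1) (j,1)
def rOf (C : Matrix (Fin d × Fin 2) (Fin d × Fin 2) ℤ) : Matrix (Fin d) (Fin d) ℤ :=
  fun i j => C (i,0) (j,0) * C (i,0) (j,1)
def cOf (C : Matrix (Fin d × Fin 2) (Fin d × Fin 2) ℤ) : Matrix (Fin d) (Fin d) ℤ :=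
  fun i j => C (i,0) (j,0) * C (i,1) (j,0)
def xOf (C : Matrix (Fin d × Fin 2) (Fin d × Fin 2) ℤ) : Matrix (Fin d) (Fin d) ℤ :=
  fun i j => C (i,0) (j,0)

def mkC (p r c x : Matrix (Fin d) (Fin d) ℤ) : Matrix (Fin d × Fin 2) (Fin d × Fin 2) ℤ :=
  fun ia jb => if ia.2 = 0 then
      (if jb.2 = 0 then x ia.1 jb.1 else x ia.1 jb.1 * r ia.1 jb.1)
    else
      (if jb.2 = 0 then x ia.1 jb.1 * c ia.1 jb.1
        else x ia.1 jb.1 * r ia.1 jb.1 * c ia.1 jb.1 * p ia.1 jb.1)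

@[simp] lemma mkC_00 {p r c x : Matrix (Fin d) (Fin d) ℤ} {i j : Fin d} :
    mkC p r c x (i,0) (j,0) = x i j := by simp [mkC]
@[simp] lemma mkC_01 {p r c x : Matrix (Fin d) (Fin d) ℤ} {i j : Fin d} :
    mkC p r c x (i,0) (j,1) = x i j * r i j := by simp [mkC]
@[simp] lemma mkC_10 {p r c x : Matrix (Fin d) (Fin d) ℤ} {i j : Fin d} :
    mkC p r c x (i,1) (j,0) = x i j * c i j := by simp [mkC]
@[simp] lemma mkC_11 {p r c x : Matrix (Fin d) (Fin d) ℤ} {i j : Fin d} :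
    mkC p r c x (i,1) (j,1) = x i j * r i j * c i j * p i j := by simp [mkC]


section BlockEquiv

variable {T : Matrix (Fin d) (Fin d) ℤ} {C : Matrix (Fin d × Fin 2) (Fin d × Fin 2) ℤ}

lemma forward_mem (hT : TwoPerLine T) (hC : C ∈ omegaSet (blow T)) :
    (Supp T (pOf C) ∧ (∀ i, ∏ j, sgn (pOf C i j) = 1) ∧ (∀ j, ∏ i, sgn (pOf C i j) = 1)) ∧
    (Supp T (rOf C) ∧ ∀ i, ∏ j, sgn (rOf C i j) = -1) ∧
    (Supp T (cOf C) ∧ ∀ j, ∏ i, sgn (cOf C i j) = -1) ∧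
    Supp T (xOf C) := by
  obtain ⟨h1, h2, h3⟩ := mem_omega_blow.1 hC
  have hz : ∀ i j, T i j = 0 → ∀ a b, C (i,a) (j,b) = 0 := fun i j h a b => (h1 i j a b).1 h
  have hu : ∀ i j, T i j = 1 → ∀ a b, C (i,a) (j,b) = 1 ∨ C (i,a) (j,b) = -1 :=
    fun i j h a b => (h1 i j a b).2 h
  have hpair : ∀ i j (a b a' b' : Fin 2),
      (C (i,a) (j,b) = 0 ∧ C (i,a') (j,b') = 0) ∨
      ((C (i,a) (j,b) = 1 ∨ C (i,a) (j,b) = -1) ∧ (C (i,a') (j,b') = 1 ∨ C (i,a') (j,b') = -1)) := by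
    intro i j a b a' b'
    rcases hT.1 i j with h | h
    · exact Or.inl ⟨hz i j h a b, hz i j h a' b'⟩
    · exact Or.inr ⟨hu i j h a b, hu i j h a' b'⟩
  have hrsplit : ∀ i j, sgn (rOf C i j) = sgn (C (i,0) (j,0)) * sgn (C (i,0) (j,1)) :=
    fun i j => sgn_mul_pair (hpair i j 0 0 0 1)
  have hcsplit : ∀ i j, sgn (cOf C i j) = sgn (C (i,0) (j,0)) * sgn (C (i,1) (j,0)) :=
    fun i j => sgn_mul_pair (hpair i j 0 0 1 0)
  have hr2split : ∀ i j, sgn (C (i,1) (j,0) * C (i,1) (j,1)) =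
      sgn (C (i,1) (j,0)) * sgn (C (i,1) (j,1)) := fun i j => sgn_mul_pair (hpair i j 1 0 1 1)
  have hc2split : ∀ i j, sgn (C (i,0) (j,1) * C (i,1) (j,1)) =
      sgn (C (i,0) (j,1)) * sgn (C (i,1) (j,1)) := fun i j => sgn_mul_pair (hpair i j 0 1 1 1)
  have hprow : ∀ i j, sgn (pOf C i j) =
      (sgn (C (i,0) (j,0)) * sgn (C (i,0) (j,1))) * (sgn (C (i,1) (j,0)) * sgn (C (i,1) (j,1))) := by
    intro i j
    have e : pOf C i j = (C (i,0) (j,0) * C (i,0) (j,1)) * (C (i,1) (j,0) * C (i,1) (j,1)) := by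
      simp [pOf]; ring
    rw [e, sgn_mul_pair, ← hrsplit i j, hr2split i j]
    · rfl
    · rcases hT.1 i j with h | h
      · exact Or.inl ⟨by rw [hz i j h 0 0, hz i j h 0 1]; ring, by rw [hz i j h 1 0]; ring⟩
      · exact Or.inr ⟨unit_mul (hu i j h 0 0) (hu i j h 0 1), unit_mul (hu i j h 1 0) (hu i j h 1 1)⟩
  have hpcol : ∀ i j, sgn (pOf C i j) =
      (sgn (C (i,0) (j,0)) * sgn (C (i,1) (j,0))) * (sgn (C (i,0) (j,1)) * sgn (C (i,1) (j,1))) := by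
    intro i j
    have e : pOf C i j = (C (i,0) (j,0) * C (i,1) (j,0)) * (C (i,0) (j,1) * C (i,1) (j,1)) := by
      simp [pOf]; ring
    rw [e, sgn_mul_pair, ← hcsplit i j, hc2split i j]
    · rfl
    · rcases hT.1 i j with h | h
      · exact Or.inl ⟨by rw [hz i j h 0 0, hz i j h 1 0]; ring, by rw [hz i j h 0 1]; ring⟩
      · exact Or.inr ⟨unit_mul (hu i j h 0 0) (hu i j h 1 0), unit_mul (hu i j h 0 1) (hu i j h 1 1)⟩
  refine ⟨⟨?_, ?_, ?_⟩, ⟨?_, ?_⟩, ⟨?_, ?_⟩, ?_⟩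
  · intro i j
    refine ⟨fun h => by simp [pOf, hz i j h 0 0], fun h => ?_⟩
    exact unit_mul (unit_mul (unit_mul (hu i j h 0 0) (hu i j h 0 1)) (hu i j h 1 0)) (hu i j h 1 1)
  · intro i
    calc ∏ j, sgn (pOf C i j)
        = ∏ j, (sgn (C (i,0) (j,0)) * sgn (C (i,0) (j,1))) * (sgn (C (i,1) (j,0)) * sgn (C (i,1) (j,1))) :=
          Finset.prod_congr rfl fun j _ => hprow i j
      _ = (∏ j, sgn (C (i,0) (j,0)) * sgn (C (i,0) (j,1))) * ∏ j, sgn (C (i,1) (j,0)) * sgn (C (i,1) (j,1)) :=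
          Finset.prod_mul_distrib
      _ = 1 := by rw [h2 i 0, h2 i 1]; ring
  · intro j
    calc ∏ i, sgn (pOf C i j)
        = ∏ i, (sgn (C (i,0) (j,0)) * sgn (C (i,1) (j,0))) * (sgn (C (i,0) (j,1)) * sgn (C (i,1) (j,1))) :=
          Finset.prod_congr rfl fun i _ => hpcol i j
      _ = (∏ i, sgn (C (i,0) (j,0)) * sgn (C (i,1) (j,0))) * ∏ i, sgn (C (i,0) (j,1)) * sgn (C (i,1) (j,1)) :=
          Finset.prod_mul_distrib
      _ = 1 := by rw [h3 j 0, h3 j 1]; ring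
  · intro i j
    refine ⟨fun h => by simp [rOf, hz i j h 0 0], fun h => unit_mul (hu i j h 0 0) (hu i j h 0 1)⟩
  · intro i
    calc ∏ j, sgn (rOf C i j)
        = ∏ j, sgn (C (i,0) (j,0)) * sgn (C (i,0) (j,1)) := Finset.prod_congr rfl fun j _ => hrsplit i j
      _ = -1 := h2 i 0
  · intro i j
    refine ⟨fun h => by simp [cOf, hz i j h 0 0], fun h => unit_mul (hu i j h 0 0) (hu i j h 1 0)⟩
  · intro j
    calc ∏ i, sgn (cOf C i j)
        = ∏ i, sgn (C (i,0) (j,0)) * sgn (C (i,1) (j,0)) := Finset.prod_congr rfl fun i _ => hcsplit i j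
      _ = -1 := h3 j 0
  · intro i j
    exact ⟨fun h => hz i j h 0 0, fun h => hu i j h 0 0⟩

lemma backward_mem (hT : TwoPerLine T) {p r c x : Matrix (Fin d) (Fin d) ℤ}
    (hp : Supp T p ∧ (∀ i, ∏ j, sgn (p i j) = 1) ∧ (∀ j, ∏ i, sgn (p i j) = 1))
    (hr : Supp T r ∧ ∀ i, ∏ j, sgn (r i j) = -1)
    (hc : Supp T c ∧ ∀ j, ∏ i, sgn (c i j) = -1)
    (hx : Supp T x) : mkC p r c x ∈ omegaSet (blow T) := by
  have hall : ∀ i j, (p i j = 0 ∧ r i j = 0 ∧ c i j = 0 ∧ x i j = 0) ∨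
      ((p i j = 1 ∨ p i j = -1) ∧ (r i j = 1 ∨ r i j = -1) ∧ (c i j = 1 ∨ c i j = -1) ∧
        (x i j = 1 ∨ x i j = -1)) := by
    intro i j
    rcases hT.1 i j with h | h
    · exact Or.inl ⟨(hp.1 i j).1 h, (hr.1 i j).1 h, (hc.1 i j).1 h, (hx i j).1 h⟩
    · exact Or.inr ⟨(hp.1 i j).2 h, (hr.1 i j).2 h, (hc.1 i j).2 h, (hx i j).2 h⟩
  have hall' : ∀ i j, (x i j = 0 ∧ r i j = 0 ∧ c i j = 0 ∧ p i j = 0) ∨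
      ((x i j = 1 ∨ x i j = -1) ∧ (r i j = 1 ∨ r i j = -1) ∧ (c i j = 1 ∨ c i j = -1) ∧
        (p i j = 1 ∨ p i j = -1)) := by
    intro i j; rcases hall i j with ⟨h1,h2,h3,h4⟩ | ⟨h1,h2,h3,h4⟩
    · exact Or.inl ⟨h4, h2, h3, h1⟩
    · exact Or.inr ⟨h4, h2, h3, h1⟩
  refine mem_omega_blow.2 ⟨?_, ?_, ?_⟩
  · intro i j a b
    constructor
    · intro h
      have h4 : p i j = 0 ∧ r i j = 0 ∧ c i j = 0 ∧ x i j = 0 :=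
        ⟨(hp.1 i j).1 h, (hr.1 i j).1 h, (hc.1 i j).1 h, (hx i j).1 h⟩
      rcases fin_two a with rfl | rfl <;> rcases fin_two b with rfl | rfl <;>
        simp [mkC_00, mkC_01, mkC_10, mkC_11, h4.1, h4.2.1, h4.2.2.1, h4.2.2.2]
    · intro h
      obtain ⟨u1, u2, u3, u4⟩ :
          (p i j = 1 ∨ p i j = -1) ∧ (r i j = 1 ∨ r i j = -1) ∧ (c i j = 1 ∨ c i j = -1) ∧
          (x i j = 1 ∨ x i j = -1) :=
        ⟨(hp.1 i j).2 h, (hr.1 i j).2 h, (hc.1 i j).2 h, (hx i j).2 h⟩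
      rcases fin_two a with rfl | rfl <;> rcases fin_two b with rfl | rfl
      · rw [mkC_00]; exact u4
      · rw [mkC_01]; exact unit_mul u4 u2
      · rw [mkC_10]; exact unit_mul u4 u3
      · rw [mkC_11]; exact unit_mul (unit_mul (unit_mul u4 u2) u3) u1
  · intro i a
    fin_cases a
    · calc ∏ j, sgn (mkC p r c x (i,0) (j,0)) * sgn (mkC p r c x (i,0) (j,1))
          = ∏ j, sgn (r i j) := Finset.prod_congr rfl fun j _ => by
            rw [mkC_00, mkC_01]
            rcases hall' i j with ⟨h1,h2,_,_⟩ | ⟨h1,h2,_,_⟩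
            · exact L1 (Or.inl ⟨h1, h2⟩)
            · exact L1 (Or.inr ⟨h1, h2⟩)
        _ = -1 := hr.2 i
    · calc ∏ j, sgn (mkC p r c x (i,1) (j,0)) * sgn (mkC p r c x (i,1) (j,1))
          = ∏ j, sgn (r i j) * sgn (p i j) := Finset.prod_congr rfl fun j _ => by
            rw [mkC_10, mkC_11]
            rcases hall' i j with h | h
            · exact L2 (Or.inl h)
            · exact L2 (Or.inr h)
        _ = (∏ j, sgn (r i j)) * ∏ j, sgn (p i j) := Finset.prod_mul_distrib
        _ = -1 := by rw [hr.2 i, hp.2.1 i]; ring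
  · intro j b
    fin_cases b
    · calc ∏ i, sgn (mkC p r c x (i,0) (j,0)) * sgn (mkC p r c x (i,1) (j,0))
          = ∏ i, sgn (c i j) := Finset.prod_congr rfl fun i _ => by
            rw [mkC_00, mkC_10]
            rcases hall' i j with ⟨h1,_,h3,_⟩ | ⟨h1,_,h3,_⟩
            · exact L1 (Or.inl ⟨h1, h3⟩)
            · exact L1 (Or.inr ⟨h1, h3⟩)
        _ = -1 := hc.2 j
    · calc ∏ i, sgn (mkC p r c x (i,0) (j,1)) * sgn (mkC p r c x (i,1) (j,1))
          = ∏ i, sgn (c i j) * sgn (p i j) := Finset.prod_congr rfl fun i _ => by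
            rw [mkC_01, mkC_11]
            rcases hall' i j with h | h
            · exact L4 (Or.inl h)
            · exact L4 (Or.inr h)
        _ = (∏ i, sgn (c i j)) * ∏ i, sgn (p i j) := Finset.prod_mul_distrib
        _ = -1 := by rw [hc.2 j, hp.2.2 j]; ring

noncomputable def blockEquiv (T : Matrix (Fin d) (Fin d) ℤ) (hT : TwoPerLine T) :
    ↥(omegaSet (blow T)) ≃ PSet T × RSet T × CSet T × XSet T where
  toFun C := ⟨⟨pOf C.1, (forward_mem hT C.2).1⟩, ⟨rOf C.1, (forward_mem hT C.2).2.1⟩,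
    ⟨cOf C.1, (forward_mem hT C.2).2.2.1⟩, ⟨xOf C.1, (forward_mem hT C.2).2.2.2⟩⟩
  invFun q := ⟨mkC q.1.1 q.2.1.1 q.2.2.1.1 q.2.2.2.1,
    backward_mem hT q.1.2 q.2.1.2 q.2.2.1.2 q.2.2.2.2⟩
  left_inv := by
    rintro ⟨C, hC⟩
    obtain ⟨h1, -, -⟩ := mem_omega_blow.1 hC
    apply Subtype.ext
    funext ia jb
    obtain ⟨i, a⟩ := ia
    obtain ⟨j, b⟩ := jb
    show mkC (pOf C) (rOf C) (cOf C) (xOf C) (i,a) (j,b) = C (i,a) (j,b)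
    rcases hT.1 i j with h0 | h
    · have z00 := (h1 i j 0 0).1 h0
      have z01 := (h1 i j 0 1).1 h0
      have z10 := (h1 i j 1 0).1 h0
      have z11 := (h1 i j 1 1).1 h0
      rcases fin_two a with rfl | rfl <;> rcases fin_two b with rfl | rfl <;>
        simp [mkC_00, mkC_01, mkC_10, mkC_11, pOf, rOf, cOf, xOf, z00, z01, z10, z11]
    · have u00 := (h1 i j 0 0).2 h
      have u01 := (h1 i j 0 1).2 h
      have u10 := (h1 i j 1 0).2 h
      rcases fin_two a with rfl | rfl <;> rcases fin_two b with rfl | rfl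
      · rw [mkC_00]; rfl
      · rw [mkC_01]; exact inv1 u00
      · rw [mkC_10]; exact inv1 u00
      · rw [mkC_11]; exact inv4 u00 u01 u10
  right_inv := by
    rintro ⟨⟨p, hp⟩, ⟨r, hr⟩, ⟨c, hc⟩, ⟨x, hx⟩⟩
    have key : ∀ i j, (pOf (mkC p r c x) i j = p i j ∧ rOf (mkC p r c x) i j = r i j) ∧
        (cOf (mkC p r c x) i j = c i j ∧ xOf (mkC p r c x) i j = x i j) := by
      intro i j
      rcases hT.1 i j with h0 | h
      · have zp := (hp.1 i j).1 h0
        have zr := (hr.1 i j).1 h0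
        have zc := (hc.1 i j).1 h0
        have zx := (hx i j).1 h0
        refine ⟨⟨?_, ?_⟩, ?_, ?_⟩ <;>
          simp [pOf, rOf, cOf, xOf, mkC_00, mkC_01, mkC_10, mkC_11, zp, zr, zc, zx]
      · have up := (hp.1 i j).2 h
        have ur := (hr.1 i j).2 h
        have uc := (hc.1 i j).2 h
        have ux := (hx i j).2 h
        refine ⟨⟨?_, ?_⟩, ?_, ?_⟩
        · show mkC p r c x (i,0) (j,0) * mkC p r c x (i,0) (j,1) * mkC p r c x (i,1) (j,0) *
            mkC p r c x (i,1) (j,1) = p i j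
          rw [mkC_00, mkC_01, mkC_10, mkC_11]
          exact inv4 ux ur uc
        · show mkC p r c x (i,0) (j,0) * mkC p r c x (i,0) (j,1) = r i j
          rw [mkC_00, mkC_01]; exact inv1 ux
        · show mkC p r c x (i,0) (j,0) * mkC p r c x (i,1) (j,0) = c i j
          rw [mkC_00, mkC_10]; exact inv1 ux
        · rfl
    simp only [Prod.mk.injEq]
    refine Prod.ext (Subtype.ext ?_) (Prod.ext (Subtype.ext ?_) (Prod.ext (Subtype.ext ?_) (Subtype.ext ?_))) <;>
      funext i j
    · exact ((key i j).1).1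
    · exact ((key i j).1).2
    · exact ((key i j).2).1
    · exact ((key i j).2).2

end BlockEquiv


/-! ## Counting equivalences for R, C, X -/

lemma unit_mul_neg_one {u v : ℤ} (hu : u = 1 ∨ u = -1) (hv : v = 1 ∨ v = -1)
    (h : u * v = -1) : v = -u := by
  rcases hu with rfl | rfl <;> rcases hv with rfl | rfl <;> omega

def pairFun (a b : Fin d → Fin d) (v w : Fin d → ℤ) : Matrix (Fin d) (Fin d) ℤ :=
  fun i j => if j = a i then v i else if j = b i then w i else 0

section Counting

variable {T : Matrix (Fin d) (Fin d) ℤ}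

lemma rEquiv_nonempty (hT : TwoPerLine T) : Nonempty (RSet T ≃ (Fin d → Bool)) := by
  choose a b hab hset using fun i => Finset.card_eq_two.1 (rowset_card T hT i)
  have hmem : ∀ i j, T i j = 1 ↔ (j = a i ∨ j = b i) := by
    intro i j
    rw [← mem_rowset, hset i, Finset.mem_insert, Finset.mem_singleton]
  have hnot : ∀ i j, j ≠ a i → j ≠ b i → T i j = 0 := by
    intro i j h1 h2
    rcases hT.1 i j with h | h
    · exact h
    · exact absurd ((hmem i j).1 h) (by tauto)
  have haT : ∀ i, T i (a i) = 1 := fun i => (hmem i _).2 (Or.inl rfl)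
  have hbT : ∀ i, T i (b i) = 1 := fun i => (hmem i _).2 (Or.inr rfl)
  refine ⟨⟨fun r i => decide (r.1 i (a i) = 1),
    fun β => ⟨pairFun a b (fun i => if β i then 1 else -1) (fun i => if β i then -1 else 1),
      ?_, ?_⟩, ?_, ?_⟩⟩
  · intro i j
    constructor
    · intro h0
      have h1 : j ≠ a i := fun e => by rw [e, haT i] at h0; omega
      have h2 : j ≠ b i := fun e => by rw [e, hbT i] at h0; omega
      simp [pairFun, h1, h2]
    · intro hone
      rcases (em (j = a i)) with rfl | h1
      · simp only [pairFun, if_pos rfl]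
        by_cases hb : β i <;> simp [hb]
      · rcases (em (j = b i)) with rfl | h2
        · simp only [pairFun, if_neg h1, if_pos rfl]
          by_cases hb : β i <;> simp [hb]
        · exact absurd ((hmem i j).1 hone) (by tauto)
  · intro i
    rw [prod_sgn_pair (hab i) (fun j h1 h2 => by simp [pairFun, h1, h2])]
    have e1 : pairFun a b (fun i => if β i then (1:ℤ) else -1) (fun i => if β i then -1 else 1) i (a i)
        = if β i then 1 else -1 := by simp [pairFun]
    have e2 : pairFun a b (fun i => if β i then (1:ℤ) else -1) (fun i => if β i then -1 else 1) i (b i)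
        = if β i then -1 else 1 := by simp [pairFun, Ne.symm (hab i)]
    rw [e1, e2]
    by_cases hb : β i <;> norm_num [hb, sgn]
  · intro r
    apply Subtype.ext
    funext i j
    have ua := (r.2.1 i (a i)).2 (haT i)
    have ub := (r.2.1 i (b i)).2 (hbT i)
    have hprod : r.1 i (a i) * r.1 i (b i) = -1 := by
      have h := r.2.2 i
      rw [prod_sgn_pair (hab i) (fun j h1 h2 => (r.2.1 i j).1 (hnot i j h1 h2)),
        sgn_unit ua, sgn_unit ub] at h
      exact h
    have hb' : r.1 i (b i) = -(r.1 i (a i)) := unit_mul_neg_one ua ub hprod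
    rcases (em (j = a i)) with rfl | h1
    · simp only [pairFun, if_pos rfl]
      rcases ua with h | h <;> simp [h]
    · rcases (em (j = b i)) with rfl | h2
      · simp only [pairFun, if_neg h1, if_pos rfl]
        rcases ua with h | h <;> simp [h, hb']
      · simp [pairFun, h1, h2, (r.2.1 i j).1 (hnot i j h1 h2)]
  · intro β
    funext i
    by_cases hb : β i <;> simp [pairFun, hb]

def transp (T : Matrix (Fin d) (Fin d) ℤ) : Matrix (Fin d) (Fin d) ℤ := fun i j => T j i

lemma transp_two (hT : TwoPerLine T) : TwoPerLine (transp T) :=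
  ⟨fun i j => hT.1 j i, hT.2.2, hT.2.1⟩

def cToR (T : Matrix (Fin d) (Fin d) ℤ) : CSet T ≃ RSet (transp T) where
  toFun c := ⟨fun j i => c.1 i j, fun p q => c.2.1 q p, c.2.2⟩
  invFun r := ⟨fun i j => r.1 j i, fun p q => r.2.1 q p, r.2.2⟩
  left_inv c := rfl
  right_inv r := rfl

lemma cEquiv_nonempty (hT : TwoPerLine T) : Nonempty (CSet T ≃ (Fin d → Bool)) := by
  obtain ⟨e⟩ := rEquiv_nonempty (transp_two hT)
  exact ⟨(cToR T).trans e⟩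

lemma xEquiv_nonempty (hT : TwoPerLine T) : Nonempty (XSet T ≃ (Fin d → Bool × Bool)) := by
  choose a b hab hset using fun i => Finset.card_eq_two.1 (rowset_card T hT i)
  have hmem : ∀ i j, T i j = 1 ↔ (j = a i ∨ j = b i) := by
    intro i j
    rw [← mem_rowset, hset i, Finset.mem_insert, Finset.mem_singleton]
  have hnot : ∀ i j, j ≠ a i → j ≠ b i → T i j = 0 := by
    intro i j h1 h2
    rcases hT.1 i j with h | h
    · exact h
    · exact absurd ((hmem i j).1 h) (by tauto)
  have haT : ∀ i, T i (a i) = 1 := fun i => (hmem i _).2 (Or.inl rfl)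
  have hbT : ∀ i, T i (b i) = 1 := fun i => (hmem i _).2 (Or.inr rfl)
  refine ⟨⟨fun x i => (decide (x.1 i (a i) = 1), decide (x.1 i (b i) = 1)),
    fun β => ⟨pairFun a b (fun i => if (β i).1 then 1 else -1) (fun i => if (β i).2 then 1 else -1),
      ?_⟩, ?_, ?_⟩⟩
  · intro i j
    constructor
    · intro h0
      have h1 : j ≠ a i := fun e => by rw [e, haT i] at h0; omega
      have h2 : j ≠ b i := fun e => by rw [e, hbT i] at h0; omega
      simp [pairFun, h1, h2]
    · intro hone
      rcases (em (j = a i)) with rfl | h1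
      · simp only [pairFun, if_pos rfl]
        by_cases hb : (β i).1 <;> simp [hb]
      · rcases (em (j = b i)) with rfl | h2
        · simp only [pairFun, if_neg h1, if_pos rfl]
          by_cases hb : (β i).2 <;> simp [hb]
        · exact absurd ((hmem i j).1 hone) (by tauto)
  · intro x
    apply Subtype.ext
    funext i j
    have ua := (x.2 i (a i)).2 (haT i)
    have ub := (x.2 i (b i)).2 (hbT i)
    rcases (em (j = a i)) with rfl | h1
    · simp only [pairFun, if_pos rfl]
      rcases ua with h | h <;> simp [h]
    · rcases (em (j = b i)) with rfl | h2
      · simp only [pairFun, if_neg h1, if_pos rfl]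
        rcases ub with h | h <;> simp [h]
      · simp [pairFun, h1, h2, (x.2 i j).1 (hnot i j h1 h2)]
  · intro β
    funext i
    by_cases h1 : (β i).1 <;> by_cases h2 : (β i).2 <;>
      simp [pairFun, Ne.symm (hab i), h1, h2, Prod.ext_iff]

end Counting


/-! ## Decompositions into two permutations -/

def DecT (T : Matrix (Fin d) (Fin d) ℤ) : Type :=
  {στ : Equiv.Perm (Fin d) × Equiv.Perm (Fin d) //
    (∀ i, στ.1 i ≠ στ.2 i) ∧
    ∀ i j, T i j = (if στ.1 i = j then 1 else 0) + (if στ.2 i = j then 1 else 0)}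

lemma filter_card_of_01 {v : Fin d → ℤ} (h01 : ∀ j, v j = 0 ∨ v j = 1) :
    ((Finset.univ.filter fun j => v j = 1).card : ℤ) = ∑ j, v j := by
  rw [Finset.card_filter]
  push_cast
  refine (Finset.sum_congr rfl fun j _ => ?_).symm
  rcases h01 j with h | h <;> simp [h]

lemma sum_ite_perm (σ : Equiv.Perm (Fin d)) (j : Fin d) :
    (∑ i, if σ i = j then (1:ℤ) else 0) = 1 := by
  rw [Fintype.sum_equiv σ _ (fun k => if k = j then (1:ℤ) else 0) (fun i => rfl)]
  simp

lemma dec_nonempty {T : Matrix (Fin d) (Fin d) ℤ} (hT : TwoPerLine T) : Nonempty (DecT T) := by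
  classical
  have hall : ∀ s : Finset (Fin d), s.card ≤ (s.biUnion (rowset T)).card := by
    intro s
    have key : (2 : ℤ) * s.card ≤ 2 * (s.biUnion (rowset T)).card := by
      have e1 : ∀ i ∈ s, ((rowset T i).card : ℤ)
          = ∑ j ∈ s.biUnion (rowset T), (if T i j = 1 then (1:ℤ) else 0) := by
        intro i hi
        have hsub : rowset T i ⊆ s.biUnion (rowset T) := fun j hj =>
          Finset.mem_biUnion.2 ⟨i, hi, hj⟩
        have : ∑ j ∈ s.biUnion (rowset T), (if T i j = 1 then (1:ℤ) else 0)
            = ∑ j ∈ s.biUnion (rowset T), (if j ∈ rowset T i then (1:ℤ) else 0) := by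
          exact Finset.sum_congr rfl fun j _ => by simp only [mem_rowset]
        rw [this, Finset.sum_ite_mem, Finset.inter_eq_right.2 hsub, Finset.sum_const]
        simp [mul_comm]
      calc (2:ℤ) * s.card = ∑ i ∈ s, ((rowset T i).card : ℤ) := by
            rw [Finset.sum_congr rfl fun i _ => by rw [rowset_card T hT i]]
            simp [mul_comm]
        _ = ∑ i ∈ s, ∑ j ∈ s.biUnion (rowset T), (if T i j = 1 then (1:ℤ) else 0) :=
            Finset.sum_congr rfl e1
        _ = ∑ j ∈ s.biUnion (rowset T), ∑ i ∈ s, (if T i j = 1 then (1:ℤ) else 0) :=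
            Finset.sum_comm
        _ ≤ ∑ j ∈ s.biUnion (rowset T), 2 := by
            refine Finset.sum_le_sum fun j _ => ?_
            have h1 : ∑ i ∈ s, (if T i j = 1 then (1:ℤ) else 0)
                ≤ ∑ i, (if T i j = 1 then (1:ℤ) else 0) := by
              refine Finset.sum_le_sum_of_subset_of_nonneg (Finset.subset_univ s) ?_
              intro i _ _; split <;> omega
            have h2 : ∑ i, (if T i j = 1 then (1:ℤ) else 0) = ∑ i, T i j :=
              Finset.sum_congr rfl fun i _ => by rcases hT.1 i j with h | h <;> simp [h]
            rw [h2, hT.2.2 j] at h1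
            exact h1
        _ = 2 * (s.biUnion (rowset T)).card := by rw [Finset.sum_const]; push_cast; ring
    omega
  obtain ⟨f, hfinj, hf⟩ :=
    (Finset.all_card_le_biUnion_card_iff_exists_injective (rowset T)).1 hall
  have hfT : ∀ i, T i (f i) = 1 := fun i => mem_rowset.1 (hf i)
  let σ : Equiv.Perm (Fin d) := Equiv.ofBijective f (Finite.injective_iff_bijective.1 hfinj)
  have hσ : ∀ i, σ i = f i := fun i => rfl
  set T' : Matrix (Fin d) (Fin d) ℤ := fun i j => T i j - (if σ i = j then 1 else 0) with hT'
  have h01' : ∀ i j, T' i j = 0 ∨ T' i j = 1 := by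
    intro i j
    by_cases h : σ i = j
    · left; simp only [hT', if_pos h]
      rw [← h, hσ, hfT i]
      ring
    · simp only [hT', if_neg h]
      have := hT.1 i j
      omega
  have hrow' : ∀ i, ∑ j, T' i j = 1 := by
    intro i
    simp only [hT']
    rw [Finset.sum_sub_distrib, hT.2.1 i, Finset.sum_ite_eq Finset.univ (σ i) (fun _ => (1:ℤ))]
    simp
  have hcol' : ∀ j, ∑ i, T' i j = 1 := by
    intro j
    simp only [hT']
    rw [Finset.sum_sub_distrib, hT.2.2 j, sum_ite_perm σ j]
    ring
  choose g hg using fun i => Finset.card_eq_one.1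
    (by exact_mod_cast (filter_card_of_01 (h01' i)).trans (hrow' i) :
      (Finset.univ.filter fun j => T' i j = 1).card = 1)
  have hgmem : ∀ i, T' i (g i) = 1 := by
    intro i
    have : g i ∈ Finset.univ.filter fun j => T' i j = 1 := by rw [hg i]; simp
    exact (Finset.mem_filter.1 this).2
  have hgonly : ∀ i j, T' i j = 1 → j = g i := by
    intro i j h
    have : j ∈ Finset.univ.filter fun j => T' i j = 1 := by simp [h]
    rw [hg i] at this
    simpa using this
  have hginj : Function.Injective g := by
    intro i₁ i₂ h
    by_contra hne
    have hle : ((({i₁, i₂} : Finset (Fin d))).sum fun i => T' i (g i₁)) ≤ ∑ i, T' i (g i₁) := by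
      refine Finset.sum_le_sum_of_subset_of_nonneg (Finset.subset_univ _) ?_
      intro i _ _
      rcases h01' i (g i₁) with hh | hh <;> omega
    rw [Finset.sum_pair hne, hcol' (g i₁)] at hle
    rw [hgmem i₁] at hle
    rw [show T' i₂ (g i₁) = 1 from h ▸ hgmem i₂] at hle
    omega
  let τ : Equiv.Perm (Fin d) := Equiv.ofBijective g (Finite.injective_iff_bijective.1 hginj)
  have hτ : ∀ i, τ i = g i := fun i => rfl
  have hT'val : ∀ i j, T' i j = (if g i = j then 1 else 0) := by
    intro i j
    by_cases h : g i = j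
    · rw [if_pos h, ← h, hgmem i]
    · rw [if_neg h]
      rcases h01' i j with hh | hh
      · exact hh
      · exact absurd (hgonly i j hh).symm h
  refine ⟨⟨(σ, τ), ?_, ?_⟩⟩
  · intro i h
    have hfσ : T i (σ i) = 1 := hfT i
    have h1 : T' i (σ i) = 0 := by simp [hT', hfσ]
    have hp : σ i = τ i := h
    rw [hp] at h1
    have h2 : T' i (τ i) = 1 := hgmem i
    rw [h2] at h1
    omega
  · intro i j
    have e : T i j = T' i j + (if σ i = j then 1 else 0) := by simp only [hT']; ring
    rw [e, hT'val i j]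
    exact add_comm _ _



/-! ## The torsor equivalence `PSet T ≃ DecT T` -/

def BaseDec (T : Matrix (Fin d) (Fin d) ℤ) (σ₀ τ₀ : Equiv.Perm (Fin d)) : Prop :=
  (∀ i, σ₀ i ≠ τ₀ i) ∧
  ∀ i j, T i j = (if σ₀ i = j then 1 else 0) + (if τ₀ i = j then 1 else 0)

namespace BaseDec

variable {T : Matrix (Fin d) (Fin d) ℤ} {σ₀ τ₀ : Equiv.Perm (Fin d)}

lemma symm (h : BaseDec T σ₀ τ₀) : BaseDec T τ₀ σ₀ :=
  ⟨fun i => (h.1 i).symm, fun i j => (h.2 i j).trans (add_comm _ _)⟩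

lemma Ta (h : BaseDec T σ₀ τ₀) (i : Fin d) : T i (σ₀ i) = 1 := by
  rw [h.2 i (σ₀ i), if_pos rfl, if_neg (Ne.symm (h.1 i))]; norm_num

lemma Tb (h : BaseDec T σ₀ τ₀) (i : Fin d) : T i (τ₀ i) = 1 := h.symm.Ta i

lemma mem (h : BaseDec T σ₀ τ₀) {i j : Fin d} (hij : T i j = 1) : σ₀ i = j ∨ τ₀ i = j := by
  by_contra hc
  push_neg at hc
  rw [h.2 i j, if_neg hc.1, if_neg hc.2] at hij
  norm_num at hij

lemma zero (h : BaseDec T σ₀ τ₀) {i j : Fin d} (h1 : σ₀ i ≠ j) (h2 : τ₀ i ≠ j) : T i j = 0 := by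
  rw [h.2 i j, if_neg h1, if_neg h2]; ring

lemma symm_ne (h : BaseDec T σ₀ τ₀) (j : Fin d) : σ₀.symm j ≠ τ₀.symm j := by
  intro hc
  exact h.1 (σ₀.symm j) (by rw [Equiv.apply_symm_apply, hc, Equiv.apply_symm_apply])

lemma Tc (h : BaseDec T σ₀ τ₀) (j : Fin d) : T (σ₀.symm j) j = 1 := by
  have := h.Ta (σ₀.symm j); rwa [Equiv.apply_symm_apply] at this

lemma Td (h : BaseDec T σ₀ τ₀) (j : Fin d) : T (τ₀.symm j) j = 1 := h.symm.Tc j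

lemma colzero (h : BaseDec T σ₀ τ₀) {i j : Fin d} (h1 : i ≠ σ₀.symm j) (h2 : i ≠ τ₀.symm j) :
    T i j = 0 := by
  refine h.zero (fun hc => h1 ?_) (fun hc => h2 ?_)
  · exact (Equiv.eq_symm_apply σ₀).2 hc
  · exact (Equiv.eq_symm_apply τ₀).2 hc

lemma colmem (h : BaseDec T σ₀ τ₀) {i j : Fin d} (hij : T i j = 1) :
    i = σ₀.symm j ∨ i = τ₀.symm j := by
  rcases h.mem hij with h' | h'
  · exact Or.inl ((Equiv.eq_symm_apply σ₀).2 h')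
  · exact Or.inr ((Equiv.eq_symm_apply τ₀).2 h')

end BaseDec

section Torsor

variable {T : Matrix (Fin d) (Fin d) ℤ} {σ₀ τ₀ : Equiv.Perm (Fin d)}
  {p : Matrix (Fin d) (Fin d) ℤ}

lemma unit_resolve {u : ℤ} (hu : u = 1 ∨ u = -1) (h : u ≠ 1) : u = -1 := hu.resolve_left h

lemma prow_eq (h : BaseDec T σ₀ τ₀) (hsupp : Supp T p)
    (hrow : ∀ i, ∏ j, sgn (p i j) = 1) (i : Fin d) : p i (σ₀ i) = p i (τ₀ i) := by
  have hh := hrow i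
  rw [prod_sgn_pair (h.1 i) (fun j h1 h2 =>
    (hsupp i j).1 (h.zero (Ne.symm h1) (Ne.symm h2)))] at hh
  rw [sgn_unit ((hsupp i (σ₀ i)).2 (h.Ta i)), sgn_unit ((hsupp i (τ₀ i)).2 (h.Tb i))] at hh
  exact unit_eq_of_mul_one ((hsupp i (σ₀ i)).2 (h.Ta i)) ((hsupp i (τ₀ i)).2 (h.Tb i)) hh

lemma pcol_eq (h : BaseDec T σ₀ τ₀) (hsupp : Supp T p)
    (hcol : ∀ j, ∏ i, sgn (p i j) = 1) (j : Fin d) : p (σ₀.symm j) j = p (τ₀.symm j) j := by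
  have hh := hcol j
  rw [prod_sgn_pair (g := fun i => p i j) (h.symm_ne j) (fun i h1 h2 =>
    (hsupp i j).1 (h.colzero h1 h2))] at hh
  rw [sgn_unit ((hsupp _ j).2 (h.Tc j)), sgn_unit ((hsupp _ j).2 (h.Td j))] at hh
  exact unit_eq_of_mul_one ((hsupp _ j).2 (h.Tc j)) ((hsupp _ j).2 (h.Td j)) hh

/-- the selected permutation -/
def selF (σ₀ τ₀ : Equiv.Perm (Fin d)) (p : Matrix (Fin d) (Fin d) ℤ) : Fin d → Fin d :=
  fun i => if p i (σ₀ i) = 1 then σ₀ i else τ₀ i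

lemma sel_spec (h : BaseDec T σ₀ τ₀) (hsupp : Supp T p)
    (hrow : ∀ i, ∏ j, sgn (p i j) = 1) (i j : Fin d) :
    selF σ₀ τ₀ p i = j ↔ ((σ₀ i = j ∧ p i j = 1) ∨ (τ₀ i = j ∧ p i j = -1)) := by
  by_cases hq : p i (σ₀ i) = 1
  · rw [selF, if_pos hq]
    constructor
    · intro e; exact Or.inl ⟨e, e ▸ hq⟩
    · rintro (⟨e, _⟩ | ⟨e, hv⟩)
      · exact e
      · exfalso
        rw [← e] at hv
        rw [prow_eq h hsupp hrow i] at hq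
        omega
  · have hq' : p i (σ₀ i) = -1 := unit_resolve ((hsupp i (σ₀ i)).2 (h.Ta i)) hq
    rw [selF, if_neg hq]
    constructor
    · intro e
      refine Or.inr ⟨e, ?_⟩
      rw [← e, ← prow_eq h hsupp hrow i]
      exact hq'
    · rintro (⟨e, hv⟩ | ⟨e, _⟩)
      · exfalso; rw [e] at hq'; omega
      · exact e
  
lemma sel_inj (h : BaseDec T σ₀ τ₀) (hsupp : Supp T p)
    (hrow : ∀ i, ∏ j, sgn (p i j) = 1) (hcol : ∀ j, ∏ i, sgn (p i j) = 1) :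
    Function.Injective (selF σ₀ τ₀ p) := by
  intro i₁ i₂ he
  have h1 := (sel_spec h hsupp hrow i₁ (selF σ₀ τ₀ p i₁)).1 rfl
  have h2 := (sel_spec h hsupp hrow i₂ (selF σ₀ τ₀ p i₁)).1 he.symm
  set j := selF σ₀ τ₀ p i₁ with hj
  have hmix : ∀ i i' : Fin d, σ₀ i = j → p i j = 1 → τ₀ i' = j → p i' j = -1 → False := by
    intro i i' e1 q1 e2 q2
    have e1' : i = σ₀.symm j := (Equiv.eq_symm_apply σ₀).2 e1
    have e2' : i' = τ₀.symm j := (Equiv.eq_symm_apply τ₀).2 e2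
    have := pcol_eq h hsupp hcol j
    rw [← e1', ← e2', q1, q2] at this
    omega
  rcases h1 with ⟨e1, q1⟩ | ⟨e1, q1⟩ <;> rcases h2 with ⟨e2, q2⟩ | ⟨e2, q2⟩
  · exact σ₀.injective (e1.trans e2.symm)
  · exact absurd (hmix i₁ i₂ e1 q1 e2 q2) (by tauto)
  · exact absurd (hmix i₂ i₁ e2 q2 e1 q1) (by tauto)
  · exact τ₀.injective (e1.trans e2.symm)

def pmk (T : Matrix (Fin d) (Fin d) ℤ) (σ₀ σ : Equiv.Perm (Fin d)) :
    Matrix (Fin d) (Fin d) ℤ :=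
  fun i j => if T i j = 1 then (if ((σ i = j) ↔ (σ₀ i = j)) then 1 else -1) else 0

lemma pmk_zero {σ₀ σ : Equiv.Perm (Fin d)} {i j : Fin d} (h0 : T i j = 0) :
    pmk T σ₀ σ i j = 0 := by
  simp only [pmk]
  rw [if_neg (by omega)]

lemma pmk_a (h : BaseDec T σ₀ τ₀) (σ : Equiv.Perm (Fin d)) (i : Fin d) :
    pmk T σ₀ σ i (σ₀ i) = if σ i = σ₀ i then 1 else -1 := by
  simp only [pmk]
  rw [if_pos (h.Ta i)]
  simp

lemma pmk_b (h : BaseDec T σ₀ τ₀) (σ : Equiv.Perm (Fin d)) (i : Fin d) :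
    pmk T σ₀ σ i (τ₀ i) = if σ i = τ₀ i then -1 else 1 := by
  simp only [pmk]
  rw [if_pos (h.Tb i)]
  have hf : ¬ (σ₀ i = τ₀ i) := h.1 i
  by_cases hs : σ i = τ₀ i <;> simp [hs, hf]

lemma pmk_c (h : BaseDec T σ₀ τ₀) (σ : Equiv.Perm (Fin d)) (j : Fin d) :
    pmk T σ₀ σ (σ₀.symm j) j = if σ (σ₀.symm j) = j then 1 else -1 := by
  simp only [pmk]
  rw [if_pos (h.Tc j)]
  simp [Equiv.apply_symm_apply]

lemma pmk_d (h : BaseDec T σ₀ τ₀) (σ : Equiv.Perm (Fin d)) (j : Fin d) :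
    pmk T σ₀ σ (τ₀.symm j) j = if σ (τ₀.symm j) = j then -1 else 1 := by
  simp only [pmk]
  rw [if_pos (h.Td j)]
  have hf : ¬ (σ₀ (τ₀.symm j) = j) := by
    intro e
    exact h.symm_ne j ((Equiv.eq_symm_apply σ₀).2 e).symm
  by_cases hs : σ (τ₀.symm j) = j <;> simp [hs, hf]

lemma pmk_mem (h : BaseDec T σ₀ τ₀) {σ τ : Equiv.Perm (Fin d)} (hq : BaseDec T σ τ) :
    Supp T (pmk T σ₀ σ) ∧ (∀ i, ∏ j, sgn (pmk T σ₀ σ i j) = 1) ∧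
    (∀ j, ∏ i, sgn (pmk T σ₀ σ i j) = 1) := by
  refine ⟨?_, ?_, ?_⟩
  · intro i j
    refine ⟨fun h0 => pmk_zero h0, fun h1 => ?_⟩
    simp only [pmk]
    rw [if_pos h1]
    split_ifs <;> simp
  · intro i
    rw [prod_sgn_pair (h.1 i) (fun j h1 h2 => pmk_zero (h.zero (Ne.symm h1) (Ne.symm h2)))]
    rw [pmk_a h σ i, pmk_b h σ i]
    by_cases hs : σ i = σ₀ i
    · have hs2 : ¬ (σ i = τ₀ i) := by rw [hs]; exact h.1 i
      rw [if_pos hs, if_neg hs2]; decide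
    · have hs2 : σ i = τ₀ i := by
        rcases h.mem (hq.Ta i) with e | e
        · exact absurd e.symm hs
        · exact e.symm
      rw [if_neg hs, if_pos hs2]; decide
  · intro j
    rw [prod_sgn_pair (g := fun i => pmk T σ₀ σ i j) (h.symm_ne j)
      (fun i h1 h2 => pmk_zero (h.colzero h1 h2))]
    rw [pmk_c h σ j, pmk_d h σ j]
    have hiff : σ (σ₀.symm j) = j ↔ ¬ (σ (τ₀.symm j) = j) := by
      constructor
      · intro e1 e2
        exact h.symm_ne j (σ.injective (e1.trans e2.symm))
      · intro ne
        rcases hq.mem (h.Tc j) with e | e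
        · exact e
        · exfalso
          have e2 : τ (τ₀.symm j) = j := by
            rcases hq.mem (h.Td j) with e' | e'
            · exact absurd e' ne
            · exact e'
          exact h.symm_ne j (τ.injective (e.trans e2.symm))
    by_cases hs : σ (σ₀.symm j) = j
    · rw [if_pos hs, if_neg (hiff.1 hs)]; decide
    · have : σ (τ₀.symm j) = j := by
        by_contra hcc
        exact hs (hiff.2 hcc)
      rw [if_neg hs, if_pos this]; decide

lemma pEquiv_nonempty (hT : TwoPerLine T) : Nonempty (PSet T ≃ DecT T) := by
  obtain ⟨⟨⟨σ₀, τ₀⟩, hb⟩⟩ := dec_nonempty hT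
  have h : BaseDec T σ₀ τ₀ := ⟨hb.1, hb.2⟩
  have punit : ∀ (p : PSet T) i, p.1 i (σ₀ i) = 1 ∨ p.1 i (σ₀ i) = -1 :=
    fun p i => (p.2.1 i (σ₀ i)).2 (h.Ta i)
  have prow : ∀ (p : PSet T) i, p.1 i (σ₀ i) = p.1 i (τ₀ i) :=
    fun p i => prow_eq h p.2.1 p.2.2.1 i
  refine ⟨⟨fun p => ⟨(Equiv.ofBijective (selF σ₀ τ₀ p.1)
      (Finite.injective_iff_bijective.1 (sel_inj h p.2.1 p.2.2.1 p.2.2.2)),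
    Equiv.ofBijective (selF τ₀ σ₀ p.1)
      (Finite.injective_iff_bijective.1 (sel_inj h.symm p.2.1 p.2.2.1 p.2.2.2))), ?_, ?_⟩,
    fun q => ⟨pmk T σ₀ q.1.1, pmk_mem h ⟨q.2.1, q.2.2⟩⟩, ?_, ?_⟩⟩
  · intro i
    simp only [Equiv.ofBijective_apply]
    by_cases hqq : p.1 i (σ₀ i) = 1
    · have e1 : selF σ₀ τ₀ p.1 i = σ₀ i := by simp only [selF]; exact if_pos hqq
      have e2 : selF τ₀ σ₀ p.1 i = τ₀ i := by
        simp only [selF]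
        exact if_pos (by rw [← prow p i]; exact hqq)
      rw [e1, e2]
      exact h.1 i
    · have e1 : selF σ₀ τ₀ p.1 i = τ₀ i := by simp only [selF]; exact if_neg hqq
      have e2 : selF τ₀ σ₀ p.1 i = σ₀ i := by
        simp only [selF]
        exact if_neg (by rw [← prow p i]; exact hqq)
      rw [e1, e2]
      exact (h.1 i).symm
  · intro i j
    simp only [Equiv.ofBijective_apply]
    by_cases hqq : p.1 i (σ₀ i) = 1
    · have e1 : selF σ₀ τ₀ p.1 i = σ₀ i := by simp only [selF]; exact if_pos hqq
      have e2 : selF τ₀ σ₀ p.1 i = τ₀ i := by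
        simp only [selF]
        exact if_pos (by rw [← prow p i]; exact hqq)
      simp only [e1, e2]
      exact hb.2 i j
    · have e1 : selF σ₀ τ₀ p.1 i = τ₀ i := by simp only [selF]; exact if_neg hqq
      have e2 : selF τ₀ σ₀ p.1 i = σ₀ i := by
        simp only [selF]
        exact if_neg (by rw [← prow p i]; exact hqq)
      simp only [e1, e2]
      rw [hb.2 i j]
      exact add_comm _ _
  · intro p
    apply Subtype.ext
    funext i j
    show pmk T σ₀ _ i j = p.1 i j
    rcases hT.1 i j with h0 | h1
    · rw [pmk_zero h0, (p.2.1 i j).1 h0]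
    · simp only [pmk, Equiv.ofBijective_apply]
      rw [if_pos h1]
      rcases h.mem h1 with e | e
      · subst e
        by_cases hqq : p.1 i (σ₀ i) = 1
        · have e1 : selF σ₀ τ₀ p.1 i = σ₀ i := by simp only [selF]; exact if_pos hqq
          rw [if_pos (by rw [e1]), hqq]
        · have e1 : selF σ₀ τ₀ p.1 i = τ₀ i := by simp only [selF]; exact if_neg hqq
          have hne : ¬ (selF σ₀ τ₀ p.1 i = σ₀ i ↔ σ₀ i = σ₀ i) := by
            rw [e1]
            simp [(h.1 i).symm]
          rw [if_neg hne, (unit_resolve (punit p i) hqq)]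
      · subst e
        have hfalse : ¬ (σ₀ i = τ₀ i) := h.1 i
        by_cases hqq : p.1 i (σ₀ i) = 1
        · have e1 : selF σ₀ τ₀ p.1 i = σ₀ i := by simp only [selF]; exact if_pos hqq
          have hpos : (selF σ₀ τ₀ p.1 i = τ₀ i ↔ σ₀ i = τ₀ i) := by
            rw [e1]
          rw [if_pos hpos, ← prow p i, hqq]
        · have e1 : selF σ₀ τ₀ p.1 i = τ₀ i := by simp only [selF]; exact if_neg hqq
          have hneg : ¬ (selF σ₀ τ₀ p.1 i = τ₀ i ↔ σ₀ i = τ₀ i) := by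
            rw [e1]
            simp [hfalse]
          rw [if_neg hneg, ← prow p i, (unit_resolve (punit _ i) hqq)]
  · intro q
    obtain ⟨⟨σ, τ⟩, hq1, hq2⟩ := q
    have hq : BaseDec T σ τ := ⟨hq1, hq2⟩
    apply Subtype.ext
    refine Prod.ext ?_ ?_
    · apply Equiv.ext
      intro i
      simp only [Equiv.ofBijective_apply]
      by_cases hs : σ i = σ₀ i
      · have : pmk T σ₀ σ i (σ₀ i) = 1 := by rw [pmk_a h σ i, if_pos hs]
        simp only [selF]
        rw [if_pos this, hs]
      · have hval : pmk T σ₀ σ i (σ₀ i) = -1 := by rw [pmk_a h σ i, if_neg hs]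
        have hs2 : τ₀ i = σ i := by
          rcases h.mem (hq.Ta i) with e | e
          · exact absurd e.symm hs
          · exact e
        simp only [selF]
        rw [if_neg (by omega), hs2]
    · apply Equiv.ext
      intro i
      simp only [Equiv.ofBijective_apply]
      by_cases hs : σ i = σ₀ i
      · have hs2 : ¬ (σ i = τ₀ i) := by rw [hs]; exact h.1 i
        have hval : pmk T σ₀ σ i (τ₀ i) = 1 := by rw [pmk_b h σ i, if_neg hs2]
        have ht : τ₀ i = τ i := by
          rcases h.mem (hq.Tb i) with e | e
          · exfalso
            exact hq.1 i (hs.trans e)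
          · exact e
        simp only [selF]
        rw [if_pos hval, ht]
      · have hs2 : σ i = τ₀ i := by
          rcases h.mem (hq.Ta i) with e | e
          · exact absurd e.symm hs
          · exact e.symm
        have hval : pmk T σ₀ σ i (τ₀ i) = -1 := by rw [pmk_b h σ i, if_pos hs2]
        have ht : σ₀ i = τ i := by
          rcases h.mem (hq.Tb i) with e | e
          · exact e
          · exfalso
            exact hq.1 i (hs2.trans e)
        simp only [selF]
        rw [if_neg (by omega), ht]

end Torsor


/-! ## Assembly -/

section Assembly

def recover (C : Matrix (Fin d × Fin 2) (Fin d × Fin 2) ℤ) : Matrix (Fin d) (Fin d) ℤ :=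
  fun i j => if C (i,0) (j,0) = 0 then 0 else 1

lemma recover_eq {T : Matrix (Fin d) (Fin d) ℤ} {C : Matrix (Fin d × Fin 2) (Fin d × Fin 2) ℤ}
    (hT : TwoPerLine T) (hC : C ∈ omegaSet (blow T)) : recover C = T := by
  obtain ⟨h1, -, -⟩ := mem_omega_blow.1 hC
  funext i j
  rcases hT.1 i j with h | h
  · rw [recover, if_pos ((h1 i j 0 0).1 h), h]
  · rw [recover, if_neg ?_, h]
    rcases (h1 i j 0 0).2 h with hh | hh <;> rw [hh] <;> omega

def bigS (d : ℕ) : Set (Matrix (Fin d × Fin 2) (Fin d × Fin 2) ℤ) :=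
  {C | ∃ T : Matrix (Fin d) (Fin d) ℤ, TwoPerLine T ∧ C ∈ omegaSet (blow T)}

def sigmaEquiv (d : ℕ) :
    ↥(bigS d) ≃ Σ T : {T : Matrix (Fin d) (Fin d) ℤ // TwoPerLine T}, ↥(omegaSet (blow T.1)) where
  toFun C := ⟨⟨recover C.1, by
      obtain ⟨T, hT, hCT⟩ := C.2
      rw [recover_eq hT hCT]; exact hT⟩,
    ⟨C.1, by
      obtain ⟨T, hT, hCT⟩ := C.2
      have h : C.1 ∈ omegaSet (blow (recover C.1)) := by
        rw [recover_eq hT hCT]; exact hCT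
      exact h⟩⟩
  invFun q := ⟨q.2.1, ⟨q.1.1, q.1.2, q.2.2⟩⟩
  left_inv C := rfl
  right_inv q := by
    obtain ⟨⟨T, hT⟩, ⟨C, hC⟩⟩ := q
    have h := recover_eq hT hC
    subst h
    rfl

def pairsType (d : ℕ) : Type :=
  {στ : Equiv.Perm (Fin d) × Equiv.Perm (Fin d) // ∀ i, στ.1 i ≠ στ.2 i}

lemma mkT_two (στ : pairsType d) :
    TwoPerLine (fun i j => (if στ.1.1 i = j then (1:ℤ) else 0) + (if στ.1.2 i = j then 1 else 0)) := by
  refine ⟨?_, ?_, ?_⟩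
  · intro i j
    dsimp only
    by_cases h1 : στ.1.1 i = j <;> by_cases h2 : στ.1.2 i = j
    · exact absurd (h1.trans h2.symm) (στ.2 i)
    · rw [if_pos h1, if_neg h2]; right; ring
    · rw [if_neg h1, if_pos h2]; right; ring
    · rw [if_neg h1, if_neg h2]; left; ring
  · intro i
    rw [Finset.sum_add_distrib,
      Finset.sum_ite_eq Finset.univ (στ.1.1 i) (fun _ => (1:ℤ)),
      Finset.sum_ite_eq Finset.univ (στ.1.2 i) (fun _ => (1:ℤ))]
    simp
  · intro j
    rw [Finset.sum_add_distrib, sum_ite_perm στ.1.1 j, sum_ite_perm στ.1.2 j]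
    norm_num

def decSigmaEquiv (d : ℕ) :
    (Σ T : {T : Matrix (Fin d) (Fin d) ℤ // TwoPerLine T}, DecT T.1) ≃ pairsType d where
  toFun q := ⟨q.2.1, q.2.2.1⟩
  invFun στ := ⟨⟨fun i j => (if στ.1.1 i = j then 1 else 0) + (if στ.1.2 i = j then 1 else 0),
      mkT_two στ⟩, ⟨στ.1, στ.2, fun _ _ => rfl⟩⟩
  left_inv := by
    rintro ⟨⟨T, hT⟩, ⟨στ, h1, h2⟩⟩
    have hM : (fun i j => (if στ.1 i = j then (1:ℤ) else 0) + (if στ.2 i = j then 1 else 0)) = T := by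
      funext i j; exact (h2 i j).symm
    subst hM
    rfl
  right_inv στ := rfl

def pairsEquiv (d : ℕ) : pairsType d ≃ Equiv.Perm (Fin d) × ↥(derangements (Fin d)) where
  toFun q := (q.1.1, ⟨q.1.1⁻¹ * q.1.2, by
    intro x hx
    have h2 : q.1.1 (q.1.1⁻¹ (q.1.2 x)) = q.1.1 x := congrArg q.1.1 hx
    rw [← Equiv.Perm.mul_apply, mul_inv_cancel, Equiv.Perm.one_apply] at h2
    exact q.2 x h2.symm⟩)
  invFun q := ⟨(q.1, q.1 * q.2.1), by
    intro i h
    have h' : q.1 i = q.1 (q.2.1 i) := h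
    exact q.2.2 i (q.1.injective h').symm⟩
  left_inv := by
    rintro ⟨⟨σ, τ⟩, h⟩
    exact Subtype.ext (Prod.ext rfl (mul_inv_cancel_left σ τ))
  right_inv := by
    rintro ⟨σ, ⟨ρ, hρ⟩⟩
    refine Prod.ext rfl (Subtype.ext ?_)
    exact inv_mul_cancel_left σ ρ

lemma fiber_equiv_nonempty (T : Matrix (Fin d) (Fin d) ℤ) (hT : TwoPerLine T) :
    Nonempty (↥(omegaSet (blow T)) ≃
      DecT T × ((Fin d → Bool) × (Fin d → Bool) × (Fin d → Bool × Bool))) := by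
  obtain ⟨eP⟩ := pEquiv_nonempty hT
  obtain ⟨eR⟩ := rEquiv_nonempty hT
  obtain ⟨eC⟩ := cEquiv_nonempty hT
  obtain ⟨eX⟩ := xEquiv_nonempty hT
  exact ⟨(blockEquiv T hT).trans
    (Equiv.prodCongr eP (Equiv.prodCongr eR (Equiv.prodCongr eC eX)))⟩

lemma bigS_card (d : ℕ) :
    Nat.card ↥(bigS d) =
      d.factorial * (numDerangements d * (2^d * (2^d * 4^d))) := by
  classical
  have hfib : ∀ T : {T : Matrix (Fin d) (Fin d) ℤ // TwoPerLine T},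
      ↥(omegaSet (blow T.1)) ≃
        DecT T.1 × ((Fin d → Bool) × (Fin d → Bool) × (Fin d → Bool × Bool)) :=
    fun T => Classical.choice (fiber_equiv_nonempty T.1 T.2)
  let E : ↥(bigS d) ≃
      (Equiv.Perm (Fin d) × ↥(derangements (Fin d))) ×
        ((Fin d → Bool) × (Fin d → Bool) × (Fin d → Bool × Bool)) :=
    (sigmaEquiv d).trans ((Equiv.sigmaCongrRight hfib).trans
      ((Equiv.sigmaProdDistrib _ _).symm.trans
        (Equiv.prodCongr ((decSigmaEquiv d).trans (pairsEquiv d)) (Equiv.refl _))))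
  rw [Nat.card_congr E]
  rw [Nat.card_eq_fintype_card]
  simp only [Fintype.card_prod, Fintype.card_perm, Fintype.card_fin, Fintype.card_fun,
    card_derangements_fin_eq_numDerangements, Fintype.card_bool]
  ring

end Assembly

lemma numDerangements_q (n : ℕ) :
    (numDerangements n : ℚ) = n.factorial * ∑ k ∈ Finset.range (n+1), (-1:ℚ)^k / k.factorial := by
  rw [← Int.cast_natCast (numDerangements n), numDerangements_sum]
  push_cast
  rw [Finset.mul_sum]
  refine Finset.sum_congr rfl fun k hk => ?_
  have h_le : k ≤ n := Finset.mem_range_succ_iff.mp hk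
  rw [Nat.ascFactorial_eq_div, add_tsub_cancel_of_le h_le]
  push_cast [Nat.factorial_dvd_factorial h_le]
  field_simp [Nat.factorial_ne_zero]

end TCount

theorem t_count (d : ℕ) (hd : 2 ≤ d) :
    ({C : Matrix (Fin d × Fin 2) (Fin d × Fin 2) ℤ |
        ∃ T : Matrix (Fin d) (Fin d) ℤ, TwoPerLine T ∧ C ∈ omegaSet (blow T)}.ncard : ℚ)
      = 2 ^ (4 * d) * (Nat.factorial d : ℚ) ^ 2 *
          ∑ i ∈ Finset.range (d + 1), (-1 : ℚ) ^ i / (Nat.factorial i : ℚ) := by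
  have hc : ({C : Matrix (Fin d × Fin 2) (Fin d × Fin 2) ℤ |
      ∃ T : Matrix (Fin d) (Fin d) ℤ, TwoPerLine T ∧ C ∈ omegaSet (blow T)}).ncard
      = d.factorial * (numDerangements d * (2^d * (2^d * 4^d))) := by
    rw [← Nat.card_coe_set_eq]
    exact TCount.bigS_card d
  rw [hc]
  push_cast
  rw [TCount.numDerangements_q d]
  have h4 : (4:ℚ)^d = (2:ℚ)^d * (2:ℚ)^d := by
    rw [show (4:ℚ) = 2 * 2 by norm_num, mul_pow]
  have h2 : (2:ℚ)^(4*d) = (2:ℚ)^d * (2:ℚ)^d * ((2:ℚ)^d * (2:ℚ)^d) := by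
    rw [show 4*d = d + d + (d + d) by ring, pow_add, pow_add]
  rw [h4, h2]
  ring
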